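/- Let κ > 0, let J = (J_1,…,J_s) be an ordered partition of {1,…,q}, and let 0 = k_0 < k_1 < … < k_u = s be integers; let J′ := (J_1∪…∪J_{k_1}, J_{k_1+1}∪…∪J_{k_2}, …, J_{k_{u−1}+1}∪…∪J_{k_u}) be the corresponding coarsening of J. Let c ∈ ℝ^q be such that c′ := π_κ(c) ∈ relint(κ·τ_J), so that the numbers t_k := c_j − c′_j (j ∈ J_k) are well-defined for k = 1,…,s. If c belongs to the closure of the preimage π_κ^{−1}(relint(κ·τ_{J′})), then t_{k_{i−1}+1} = t_{k_{i−1}+2} = … = t_{k_i} for each i = 1,…,u. -/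

import Mathlib

open Set Pointwise

noncomputable section

/-- The vertex `P_ρ` of the permutohedron: the point whose `ρ(k)`-th coordinate is
`k − (q+1)/2` (with `k` running through `1,…,q`, here 0-indexed as `Fin q`). -/
def vertexPoint (q : ℕ) (ρ : Equiv.Perm (Fin q)) : EuclideanSpace ℝ (Fin q) :=
  WithLp.toLp 2 (fun i => ((ρ.symm i : ℕ) + 1 : ℝ) - ((q : ℝ) + 1) / 2)

/-- The permutohedron `P^{q−1} ⊂ ℝ^q`: the convex hull of the points `P_ρ`. -/
def permutohedron (q : ℕ) : Set (EuclideanSpace ℝ (Fin q)) :=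
  convexHull ℝ (Set.range (vertexPoint q))

/-- An ordered partition `J = (J_1,…,J_s)` of `{1,…,q}` into `s` nonempty subsets. -/
structure OrderedPartition (q s : ℕ) where
  blocks : Fin s → Finset (Fin q)
  nonempty : ∀ k, (blocks k).Nonempty
  disjoint : ∀ k l, k ≠ l → Disjoint (blocks k) (blocks l)
  covers : ∀ j : Fin q, ∃ k, j ∈ blocks k

/-- `cumCard J n = r_n`, the total cardinality of the first `n` blocks. -/
def cumCard {q s : ℕ} (J : OrderedPartition q s) (n : ℕ) : ℕ :=
  ∑ i ∈ Finset.univ.filter (fun i : Fin s => (i : ℕ) < n), (J.blocks i).card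

/-- A permutation `π` is compatible with the ordered partition `J` if it maps the
`k`-th consecutive block `{r_{k−1}+1,…,r_k}` (0-indexed: `[r_{k−1}, r_k)`) onto `J_k`;
these are exactly the permutations `σρ` with `σ` in the Young subgroup. -/
def compatiblePerm {q s : ℕ} (J : OrderedPartition q s) (π : Equiv.Perm (Fin q)) : Prop :=
  ∀ (k : Fin s) (i : Fin q),
    π i ∈ J.blocks k ↔ cumCard J (k : ℕ) ≤ (i : ℕ) ∧ (i : ℕ) < cumCard J ((k : ℕ) + 1)

/-- The face `τ_J` of the permutohedron corresponding to the ordered partition `J`. -/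
def face (q s : ℕ) (J : OrderedPartition q s) : Set (EuclideanSpace ℝ (Fin q)) :=
  convexHull ℝ {x | ∃ π : Equiv.Perm (Fin q), compatiblePerm J π ∧ x = vertexPoint q π}

/-- The metric projection onto a set `K`: a point of `K` at minimal distance
(unique when `K` is compact, convex and nonempty in Euclidean space). -/
def metricProj {E : Type*} [MetricSpace E] [Nonempty E] (K : Set E) (c : E) : E :=
  Classical.epsilon fun y => y ∈ K ∧ ∀ z ∈ K, dist c y ≤ dist c z


/-! ### Auxiliary lemmas -/

open scoped RealInnerProductSpace

section ProjLemmas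

variable {E : Type*} [NormedAddCommGroup E] [InnerProductSpace ℝ E] [Nonempty E]

lemma metricProj_spec' {K : Set E} (hK : IsCompact K) (hne : K.Nonempty) (c : E) :
    metricProj K c ∈ K ∧ ∀ z ∈ K, dist c (metricProj K c) ≤ dist c z := by
  have h : ∃ y, y ∈ K ∧ ∀ z ∈ K, dist c y ≤ dist c z := by
    obtain ⟨y, hyK, hy⟩ := hK.exists_isMinOn hne
      (Continuous.continuousOn (continuous_const.dist continuous_id))
    exact ⟨y, hyK, fun z hz => hy hz⟩
  exact Classical.epsilon_spec h

lemma metricProj_inner_le' {K : Set E} (hK : IsCompact K) (hconv : Convex ℝ K)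
    (hne : K.Nonempty) (c : E) {y : E} (hy : y ∈ K) :
    ⟪c - metricProj K c, y - metricProj K c⟫ ≤ 0 := by
  obtain ⟨hp, hmin⟩ := metricProj_spec' hK hne c
  haveI := hne.to_subtype
  have heq : ‖c - metricProj K c‖ = ⨅ w : K, ‖c - w‖ := by
    apply le_antisymm
    · exact le_ciInf fun w => by rw [← dist_eq_norm, ← dist_eq_norm]; exact hmin w w.2
    · exact ciInf_le ⟨0, fun _ ⟨w, h⟩ => h ▸ norm_nonneg _⟩ (⟨_, hp⟩ : K)
  exact (norm_eq_iInf_iff_real_inner_le_zero hconv hp).1 heq y hy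

lemma metricProj_lipschitz' {K : Set E} (hK : IsCompact K) (hconv : Convex ℝ K)
    (hne : K.Nonempty) (c d : E) :
    ‖metricProj K c - metricProj K d‖ ≤ ‖c - d‖ := by
  set p := metricProj K c
  set r := metricProj K d
  have h1 : ⟪c - p, r - p⟫ ≤ 0 := metricProj_inner_le' hK hconv hne c (metricProj_spec' hK hne d).1
  have h2 : ⟪d - r, p - r⟫ ≤ 0 := metricProj_inner_le' hK hconv hne d (metricProj_spec' hK hne c).1
  have key : ‖p - r‖ * ‖p - r‖ ≤ ⟪c - d, p - r⟫ := by
    have expand : ⟪c - d, p - r⟫ - ⟪p - r, p - r⟫ = (-⟪c - p, r - p⟫) + (-⟪d - r, p - r⟫) := by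
      simp only [inner_sub_left, inner_sub_right]
      simp only [real_inner_comm p c, real_inner_comm r c, real_inner_comm p d,
        real_inner_comm r d, real_inner_comm p r]
      ring
    have h3 := real_inner_self_eq_norm_mul_norm (p - r)
    linarith
  rcases eq_or_lt_of_le (norm_nonneg (p - r)) with h0 | h0
  · simp [← h0]
  · have := key.trans (real_inner_le_norm (c - d) (p - r))
    calc ‖p - r‖ = ‖p - r‖ * ‖p - r‖ / ‖p - r‖ := by field_simp
    _ ≤ ‖c - d‖ * ‖p - r‖ / ‖p - r‖ := by gcongr
    _ = ‖c - d‖ := by field_simp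

end ProjLemmas

lemma intrinsicInterior_extend {V : Type*} [NormedAddCommGroup V] [NormedSpace ℝ V]
    {S : Set V} {x y : V} (hx : x ∈ intrinsicInterior ℝ S) (hy : y ∈ S) :
    ∃ ε : ℝ, 0 < ε ∧ x + ε • (x - y) ∈ S := by
  obtain ⟨x', hx', hxx⟩ := hx
  subst hxx
  have hyA : y ∈ affineSpan ℝ S := subset_affineSpan ℝ S hy
  have hmem : ∀ ε : ℝ, ((x' : V) + ε • ((x' : V) - y)) ∈ affineSpan ℝ S := by
    intro ε
    have h := AffineSubspace.smul_vsub_vadd_mem (affineSpan ℝ S) ε x'.2 hyA x'.2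
    simpa [vsub_eq_sub, vadd_eq_add, add_comm] using h
  set f : ℝ → affineSpan ℝ S := fun ε => ⟨(x' : V) + ε • ((x' : V) - y), hmem ε⟩ with hf'
  have hf : Continuous f := by
    apply Continuous.subtype_mk
    exact continuous_const.add ((continuous_id.smul continuous_const))
  have h0 : f 0 ∈ interior ((↑) ⁻¹' S : Set (affineSpan ℝ S)) := by
    have : f 0 = x' := by simp [hf']
    rwa [this]
  have hnhds : f ⁻¹' (interior ((↑) ⁻¹' S : Set (affineSpan ℝ S))) ∈ nhds (0 : ℝ) :=
    hf.continuousAt.preimage_mem_nhds (isOpen_interior.mem_nhds h0)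
  obtain ⟨ε, hε, hball⟩ := Metric.mem_nhds_iff.1 hnhds
  refine ⟨ε / 2, by positivity, ?_⟩
  have hin : f (ε / 2) ∈ interior ((↑) ⁻¹' S : Set (affineSpan ℝ S)) := by
    apply hball
    simp [Real.dist_eq, abs_of_pos, hε, half_lt_self hε, le_of_lt hε]
  have hmem2 : f (ε / 2) ∈ ((↑) ⁻¹' S : Set (affineSpan ℝ S)) := interior_subset hin
  exact hmem2

lemma inner_eq_zero_of_intrinsicInterior {E : Type*} [NormedAddCommGroup E]
    [InnerProductSpace ℝ E] {S : Set E} {x v : E} (hx : x ∈ intrinsicInterior ℝ S)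
    (hle : ∀ z ∈ S, ⟪v, z - x⟫ ≤ 0) {y : E} (hy : y ∈ S) : ⟪v, y - x⟫ = 0 := by
  obtain ⟨ε, hε, hz⟩ := intrinsicInterior_extend hx hy
  have h1 := hle y hy
  have h2 := hle _ hz
  have he : (x + ε • (x - y)) - x = (-ε) • (y - x) := by
    rw [add_sub_cancel_left, neg_smul, smul_sub, smul_sub]; abel
  rw [he, inner_smul_right] at h2
  nlinarith

/-! ### Combinatorial lemmas -/

lemma cumCard_mono {q s : ℕ} (J : OrderedPartition q s) : Monotone (cumCard J) := by
  intro m n h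
  apply Finset.sum_le_sum_of_subset
  intro i hi
  simp only [Finset.mem_filter, Finset.mem_univ, true_and] at hi ⊢
  omega

lemma interval_iff {q u : ℕ} (J' : OrderedPartition q u) {i0 k : Fin u} {x : ℕ}
    (hx : cumCard J' (i0 : ℕ) ≤ x ∧ x < cumCard J' ((i0 : ℕ) + 1)) :
    (cumCard J' (k : ℕ) ≤ x ∧ x < cumCard J' ((k : ℕ) + 1)) ↔ k = i0 := by
  constructor
  · intro hk
    by_contra hne
    rcases lt_or_gt_of_ne (fun h : (k : ℕ) = (i0 : ℕ) => hne (Fin.ext h)) with h | h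
    · have := cumCard_mono J' (show (k : ℕ) + 1 ≤ (i0 : ℕ) from h)
      omega
    · have := cumCard_mono J' (show (i0 : ℕ) + 1 ≤ (k : ℕ) from h)
      omega
  · rintro rfl; exact hx

lemma compatiblePerm_swap {q u : ℕ} (J' : OrderedPartition q u) {π : Equiv.Perm (Fin q)}
    (hπ : compatiblePerm J' π) {m m' : Fin q} {i0 : Fin u}
    (hm : cumCard J' (i0 : ℕ) ≤ (m : ℕ) ∧ (m : ℕ) < cumCard J' ((i0 : ℕ) + 1))
    (hm' : cumCard J' (i0 : ℕ) ≤ (m' : ℕ) ∧ (m' : ℕ) < cumCard J' ((i0 : ℕ) + 1)) :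
    compatiblePerm J' (π * Equiv.swap m m') := by
  intro k i
  have happ : (π * Equiv.swap m m') i = π (Equiv.swap m m' i) := rfl
  rw [happ, hπ k _]
  by_cases him : i = m
  · subst him
    rw [Equiv.swap_apply_left]
    rw [interval_iff J' hm', interval_iff J' hm]
  · by_cases him' : i = m'
    · subst him'
      rw [Equiv.swap_apply_right]
      rw [interval_iff J' hm, interval_iff J' hm']
    · rw [Equiv.swap_apply_of_ne_of_ne him him']

/-! ### Geometry of the permutohedron -/

lemma face_subset {q s : ℕ} (J : OrderedPartition q s) : face q s J ⊆ permutohedron q := by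
  apply convexHull_mono
  rintro x ⟨π, _, rfl⟩
  exact ⟨π, rfl⟩

lemma perm_isCompact (q : ℕ) : IsCompact (permutohedron q) :=
  (Set.finite_range (vertexPoint q)).isCompact_convexHull (𝕜 := ℝ)

lemma perm_nonempty (q : ℕ) : (permutohedron q).Nonempty :=
  convexHull_nonempty_iff.2 (Set.range_nonempty _)

/-- The key coordinate identity: if the projection of `d` lies in the relative interior
of `κ • face q u J'`, then `d - proj d` has equal coordinates at `π m` and `π m'` for
positions `m, m'` lying in the same coarse interval. -/
lemma key_coord (q u : ℕ) {κ : ℝ} (hκ : 0 < κ) (J' : OrderedPartition q u)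
    {π : Equiv.Perm (Fin q)} (hπ : compatiblePerm J' π) {m m' : Fin q} {i0 : Fin u}
    (hm : cumCard J' (i0 : ℕ) ≤ (m : ℕ) ∧ (m : ℕ) < cumCard J' ((i0 : ℕ) + 1))
    (hm' : cumCard J' (i0 : ℕ) ≤ (m' : ℕ) ∧ (m' : ℕ) < cumCard J' ((i0 : ℕ) + 1))
    (d : EuclideanSpace ℝ (Fin q))
    (hd : metricProj (κ • permutohedron q) d ∈ intrinsicInterior ℝ (κ • face q u J')) :
    (d - metricProj (κ • permutohedron q) d) (π m)
      = (d - metricProj (κ • permutohedron q) d) (π m') := by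
  rcases eq_or_ne m m' with rfl | hmm
  · rfl
  set K := κ • permutohedron q with hKdef
  set p := metricProj K d with hpdef
  have hKc : IsCompact K := (perm_isCompact q).smul κ
  have hKconv : Convex ℝ K := (convex_convexHull ℝ _).smul κ
  have hKne : K.Nonempty := (perm_nonempty q).smul_set
  have hSsub : κ • face q u J' ⊆ K := smul_set_mono (face_subset J')
  have hle : ∀ z ∈ κ • face q u J', ⟪d - p, z - p⟫ ≤ 0 :=
    fun z hz => metricProj_inner_le' hKc hKconv hKne d (hSsub hz)
  have hzero : ∀ y ∈ κ • face q u J', ⟪d - p, y - p⟫ = 0 :=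
    fun y hy => inner_eq_zero_of_intrinsicInterior hd hle hy
  set π' := π * Equiv.swap m m' with hπ'def
  have hπ' : compatiblePerm J' π' := compatiblePerm_swap J' hπ hm hm'
  have hv1 : vertexPoint q π ∈ face q u J' := subset_convexHull ℝ _ ⟨π, hπ, rfl⟩
  have hv2 : vertexPoint q π' ∈ face q u J' := subset_convexHull ℝ _ ⟨π', hπ', rfl⟩
  have h1 := hzero _ (Set.smul_mem_smul_set (a := κ) hv1)
  have h2 := hzero _ (Set.smul_mem_smul_set (a := κ) hv2)
  have hdiff : ⟪d - p, κ • vertexPoint q π - κ • vertexPoint q π'⟫ = 0 := by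
    have : κ • vertexPoint q π - κ • vertexPoint q π'
        = (κ • vertexPoint q π - p) - (κ • vertexPoint q π' - p) := by abel
    rw [this, inner_sub_right, h1, h2, sub_zero]
  rw [← smul_sub, inner_smul_right] at hdiff
  have hinner : ⟪d - p, vertexPoint q π - vertexPoint q π'⟫ = 0 := by
    rcases mul_eq_zero.1 hdiff with h | h
    · exact absurd h (ne_of_gt hκ)
    · exact h
  -- compute the inner product as a sum
  have hsymm : ∀ i : Fin q, π'.symm i = Equiv.swap m m' (π.symm i) := by
    intro i; rw [hπ'def, Equiv.Perm.mul_def, Equiv.symm_trans_apply, Equiv.symm_swap]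
  have hcoord : ∀ i : Fin q,
      (vertexPoint q π - vertexPoint q π') i
        = ((π.symm i : ℕ) : ℝ) - ((Equiv.swap m m' (π.symm i) : ℕ) : ℝ) := by
    intro i
    have h' : (vertexPoint q π - vertexPoint q π') i
        = vertexPoint q π i - vertexPoint q π' i := rfl
    rw [h']
    simp only [vertexPoint, PiLp.toLp_apply]
    rw [hsymm]
    ring
  have hsum : ∑ j : Fin q, (d - p) (π j) *
      (((j : ℕ) : ℝ) - ((Equiv.swap m m' j : ℕ) : ℝ)) = 0 := by
    have := hinner
    rw [PiLp.inner_apply] at this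
    simp only [RCLike.inner_apply, conj_trivial] at this
    rw [← Equiv.sum_comp π (fun i => (vertexPoint q π - vertexPoint q π') i * (d - p) i)] at this
    · rw [← this]
      apply Finset.sum_congr rfl
      intro j _
      rw [hcoord (π j)]
      simp [mul_comm]
  -- the sum has only two nonzero terms
  have hzero' : ∀ j : Fin q, j ∉ ({m, m'} : Finset (Fin q)) →
      (d - p) (π j) * (((j : ℕ) : ℝ) - ((Equiv.swap m m' j : ℕ) : ℝ)) = 0 := by
    intro j hj
    simp only [Finset.mem_insert, Finset.mem_singleton, not_or] at hj
    rw [Equiv.swap_apply_of_ne_of_ne hj.1 hj.2]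
    simp
  have hsum2 : ∑ j ∈ ({m, m'} : Finset (Fin q)), (d - p) (π j) *
      (((j : ℕ) : ℝ) - ((Equiv.swap m m' j : ℕ) : ℝ)) = 0 := by
    rw [← hsum]
    exact Finset.sum_subset (Finset.subset_univ _) (fun j _ hj => hzero' j hj)
  rw [Finset.sum_pair hmm, Equiv.swap_apply_left, Equiv.swap_apply_right] at hsum2
  have hcast : ((m : ℕ) : ℝ) ≠ ((m' : ℕ) : ℝ) := by
    exact_mod_cast fun h => hmm (Fin.ext h)
  have : ((d - p) (π m) - (d - p) (π m')) * (((m : ℕ) : ℝ) - ((m' : ℕ) : ℝ)) = 0 := by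
    linarith [hsum2]
  rcases mul_eq_zero.1 this with h | h
  · linarith
  · exact absurd (by linarith : ((m : ℕ) : ℝ) = ((m' : ℕ) : ℝ)) hcast


/-- let `J′` be the coarsening of `J = (J_1,…,J_s)` determined by
`0 = k_0 < k_1 < … < k_u = s`, i.e. `J′_i = J_{k_{i−1}+1} ∪ … ∪ J_{k_i}`. If
`c′ = π_κ(c) ∈ relint(κ·τ_J)`, so that `t_k := c_j − c′_j` (`j ∈ J_k`) are well
defined, and `c` lies in the closure of `π_κ^{−1}(relint(κ·τ_{J′}))`, then the `t_k`
are constant on each coarse block: `t_{k_{i−1}+1} = … = t_{k_i}` for each `i`. -/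
theorem differences_constant_on_coarse_blocks (q s u : ℕ) (hq : 1 ≤ q)
    (κ : ℝ) (hκ : 0 < κ)
    (J : OrderedPartition q s) (J' : OrderedPartition q u)
    (ki : ℕ → ℕ) (hki0 : ki 0 = 0) (hkiu : ki u = s)
    (hkimono : ∀ i < u, ki i < ki (i + 1))
    (hJ' : ∀ i : Fin u, J'.blocks i =
      (Finset.univ.filter
        (fun k : Fin s => ki (i : ℕ) ≤ (k : ℕ) ∧ (k : ℕ) < ki ((i : ℕ) + 1))).biUnion
        J.blocks)
    (c c' : EuclideanSpace ℝ (Fin q))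
    (hc' : c' = metricProj (κ • permutohedron q) c)
    (hrel : c' ∈ intrinsicInterior ℝ (κ • face q s J))
    (t : Fin s → ℝ) (ht : ∀ k : Fin s, ∀ j ∈ J.blocks k, c j - c' j = t k)
    (hcl : c ∈ closure
      (metricProj (κ • permutohedron q) ⁻¹' intrinsicInterior ℝ (κ • face q u J'))) :
    ∀ i < u, ∀ a b : Fin s,
      ki i ≤ (a : ℕ) → (a : ℕ) < ki (i + 1) →
      ki i ≤ (b : ℕ) → (b : ℕ) < ki (i + 1) → t a = t b := by
  intro i hiu a b ha1 ha2 hb1 hb2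
  set K := κ • permutohedron q with hKdef
  have hKc : IsCompact K := (perm_isCompact q).smul κ
  have hKconv : Convex ℝ K := (convex_convexHull ℝ _).smul κ
  have hKne : K.Nonempty := (perm_nonempty q).smul_set
  -- a compatible permutation for `J'` exists, since the preimage is nonempty
  have hpre : (metricProj K ⁻¹' intrinsicInterior ℝ (κ • face q u J')).Nonempty := by
    by_contra h
    rw [Set.not_nonempty_iff_eq_empty] at h
    rw [h, closure_empty] at hcl
    exact hcl
  obtain ⟨d0, hd0⟩ := hpre
  have hfne : ∃ π : Equiv.Perm (Fin q), compatiblePerm J' π := by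
    have h1 : (κ • face q u J').Nonempty := ⟨_, intrinsicInterior_subset hd0⟩
    obtain ⟨y, hy⟩ := h1
    obtain ⟨z, hz, -⟩ := hy
    have : {x | ∃ π : Equiv.Perm (Fin q), compatiblePerm J' π ∧ x = vertexPoint q π}.Nonempty :=
      convexHull_nonempty_iff.1 ⟨z, hz⟩
    obtain ⟨x, π, hπ, -⟩ := this
    exact ⟨π, hπ⟩
  obtain ⟨π, hπ⟩ := hfne
  -- pick elements of the blocks
  obtain ⟨j, hj⟩ := J.nonempty a
  obtain ⟨j', hj'⟩ := J.nonempty b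
  set i0 : Fin u := ⟨i, hiu⟩ with hi0
  have hjJ' : j ∈ J'.blocks i0 := by
    rw [hJ' i0]
    exact Finset.mem_biUnion.2 ⟨a, by
      simp only [Finset.mem_filter, Finset.mem_univ, true_and]; exact ⟨ha1, ha2⟩, hj⟩
  have hj'J' : j' ∈ J'.blocks i0 := by
    rw [hJ' i0]
    exact Finset.mem_biUnion.2 ⟨b, by
      simp only [Finset.mem_filter, Finset.mem_univ, true_and]; exact ⟨hb1, hb2⟩, hj'⟩
  set m : Fin q := π.symm j with hmdef
  set m' : Fin q := π.symm j' with hm'def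
  have hπm : π m = j := Equiv.apply_symm_apply π j
  have hπm' : π m' = j' := Equiv.apply_symm_apply π j'
  have hm : cumCard J' (i0 : ℕ) ≤ (m : ℕ) ∧ (m : ℕ) < cumCard J' ((i0 : ℕ) + 1) :=
    (hπ i0 m).1 (by rw [hπm]; exact hjJ')
  have hm' : cumCard J' (i0 : ℕ) ≤ (m' : ℕ) ∧ (m' : ℕ) < cumCard J' ((i0 : ℕ) + 1) :=
    (hπ i0 m').1 (by rw [hπm']; exact hj'J')
  -- the approximating sequence
  obtain ⟨dseq, hdmem, hdlim⟩ := mem_closure_iff_seq_limit.1 hcl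
  have hn : ∀ n, (dseq n - metricProj K (dseq n)) j = (dseq n - metricProj K (dseq n)) j' := by
    intro n
    have := key_coord q u hκ J' hπ hm hm' (dseq n) (hdmem n)
    rwa [hπm, hπm'] at this
  -- limits
  have hplim : Filter.Tendsto (fun n => metricProj K (dseq n)) Filter.atTop (nhds c') := by
    rw [hc']
    rw [tendsto_iff_norm_sub_tendsto_zero]
    apply squeeze_zero (fun n => norm_nonneg _)
      (fun n => metricProj_lipschitz' hKc hKconv hKne (dseq n) c)
    rw [← tendsto_iff_norm_sub_tendsto_zero]
    exact hdlim
  have hwlim : Filter.Tendsto (fun n => dseq n - metricProj K (dseq n)) Filter.atTop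
      (nhds (c - c')) := hdlim.sub hplim
  have hcont : ∀ (jj : Fin q), Filter.Tendsto
      (fun n => (dseq n - metricProj K (dseq n)) jj) Filter.atTop (nhds ((c - c') jj)) := by
    intro jj
    exact ((EuclideanSpace.proj (𝕜 := ℝ) jj).continuous.tendsto (c - c')).comp hwlim
  have heq : (c - c') j = (c - c') j' := by
    apply tendsto_nhds_unique (hcont j)
    have : (fun n => (dseq n - metricProj K (dseq n)) j)
        = fun n => (dseq n - metricProj K (dseq n)) j' := funext hn
    rw [this]
    exact hcont j'
  have hsub : ∀ jj : Fin q, (c - c') jj = c jj - c' jj := fun jj => rfl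
  rw [← ht a j hj, ← ht b j' hj', ← hsub j, ← hsub j', heq]


end
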